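/- Let n ≥ 2, J ⊆ {0,...,n-1} nonempty, δ real with |δ| < 1, and θ : J → ℝ a function with |θ_j| ≤ n/32 for all j ∈ J. Suppose |J| ≥ n(1 - sinc(δ))/(1 - 2 sin(π/32)). Then (1/|J|²)·|Σ_{j∈J} e^{2πi(δj + θ_j)/n}|² ≥ (1 - 2 sin(π/32) - (1 - sinc(δ))·n/|J|)². -/

import Mathlib

open Finset

/-- The normalized sinc function `sinc δ = sin(πδ)/(πδ)` with `sinc 0 = 1`. -/
noncomputable def sinc (δ : ℝ) : ℝ :=
  if δ = 0 then 1 else Real.sin (Real.pi * δ) / (Real.pi * δ)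

lemma abs_exp_I_sub_one (x : ℝ) :
    ‖Complex.exp ((x : ℂ) * Complex.I) - 1‖ = 2 * |Real.sin (x / 2)| := by
  have e1 : Real.cos x = 2 * Real.cos (x/2)^2 - 1 := by
    have := Real.cos_two_mul (x/2); rw [show 2*(x/2) = x by ring] at this; linarith
  have e2 : Real.sin x = 2 * Real.sin (x/2) * Real.cos (x/2) := by
    have := Real.sin_two_mul (x/2); rw [show 2*(x/2) = x by ring] at this; linarith
  have hre : (Complex.exp ((x : ℂ) * Complex.I) - 1).re = Real.cos x - 1 := by
    simp [Complex.exp_ofReal_mul_I_re]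
  have him : (Complex.exp ((x : ℂ) * Complex.I) - 1).im = Real.sin x := by
    simp [Complex.exp_ofReal_mul_I_im]
  rw [Complex.norm_def, Complex.normSq_apply, hre, him]
  have key : (Real.cos x - 1) * (Real.cos x - 1) + Real.sin x * Real.sin x
      = (2 * Real.sin (x/2))^2 := by
    have h3 := Real.sin_sq_add_cos_sq (x/2)
    rw [e1, e2]; nlinarith [h3]
  rw [key, Real.sqrt_sq_eq_abs, abs_mul]
  norm_num

lemma abs_sin_eq_sin_abs (y : ℝ) (hy : |y| ≤ Real.pi) : |Real.sin y| = Real.sin |y| := by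
  rcases le_or_gt 0 y with h | h
  · rw [abs_of_nonneg h]
    exact abs_of_nonneg (Real.sin_nonneg_of_nonneg_of_le_pi h
      (by rwa [abs_of_nonneg h] at hy))
  · rw [abs_of_neg h, show Real.sin y = -Real.sin (-y) by rw [Real.sin_neg]; ring, abs_neg]
    exact abs_of_nonneg (Real.sin_nonneg_of_nonneg_of_le_pi (by linarith)
      (by rwa [abs_of_neg h] at hy))

set_option maxHeartbeats 1000000 in
/-- Perturbed geometric sums with missing terms. -/
theorem perturbed_geom_sum_missing_terms (n : ℕ) (hn : 2 ≤ n) (J : Finset ℕ)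
    (hJ : J ⊆ Finset.range n) (hne : J.Nonempty) (δ : ℝ) (hδ : |δ| < 1)
    (θ : ℕ → ℝ) (hθ : ∀ j ∈ J, |θ j| ≤ (n : ℝ) / 32)
    (hcard : (n : ℝ) * (1 - sinc δ) / (1 - 2 * Real.sin (Real.pi / 32)) ≤ (J.card : ℝ)) :
    (1 - 2 * Real.sin (Real.pi / 32) - (1 - sinc δ) * n / (J.card : ℝ)) ^ 2 ≤
      (1 / (J.card : ℝ) ^ 2) *
        ‖∑ j ∈ J,
          Complex.exp (2 * Real.pi * Complex.I * (δ * j + θ j) / n)‖ ^ 2 := by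
  have hpi : (0:ℝ) < Real.pi := Real.pi_pos
  have hpi4 : Real.pi < 4 := by nlinarith [Real.pi_lt_d2]
  have hn0 : (0:ℝ) < n := by
    have : 0 < n := lt_of_lt_of_le two_pos hn
    exact_mod_cast this
  have hm0 : (0:ℝ) < (J.card : ℝ) := by exact_mod_cast hne.card_pos
  have hn2 : (2:ℝ) ≤ n := by exact_mod_cast hn
  set m : ℝ := (J.card : ℝ) with hmdef
  set s : ℝ := Real.sin (Real.pi / 32) with hsdef
  have hs_pos : 0 < s := Real.sin_pos_of_pos_of_lt_pi (by positivity) (by nlinarith)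
  have hs_lt : s < 1/2 := by
    have h1 : s ≤ Real.pi / 32 := Real.sin_le (by positivity)
    nlinarith
  set e : ℝ → ℂ := fun t => Complex.exp ((t:ℂ) * Complex.I) with hedef
  have habs_e : ∀ t, ‖e t‖ = 1 := fun t => Complex.norm_exp_ofReal_mul_I t
  have he_add : ∀ a b : ℝ, e (a + b) = e a * e b := by
    intro a b
    simp only [hedef, ← Complex.exp_add]
    congr 1; push_cast; ring
  have hS : (∑ j ∈ J, Complex.exp (2 * Real.pi * Complex.I * (δ * j + θ j) / n))
      = ∑ j ∈ J, e (2 * Real.pi * (δ * j + θ j) / n) := by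
    refine Finset.sum_congr rfl fun j _ => ?_
    simp only [hedef]; congr 1; push_cast; ring
  rw [hS]
  set S := ∑ j ∈ J, e (2 * Real.pi * (δ * j + θ j) / n) with hSdef
  set T := ∑ j ∈ J, e (2 * Real.pi * (δ * j) / n) with hTdef
  set F := ∑ j ∈ Finset.range n, e (2 * Real.pi * (δ * j) / n) with hFdef
  -- Step A : |S - T| ≤ m * (2s)
  have hA : ‖S - T‖ ≤ m * (2 * s) := by
    rw [hSdef, hTdef, ← Finset.sum_sub_distrib]
    refine le_trans (norm_sum_le _ _) ?_
    have hterm : ∀ j ∈ J,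
        ‖e (2 * Real.pi * (δ * j + θ j) / n) - e (2 * Real.pi * (δ * j) / n)‖
          ≤ 2 * s := by
      intro j hj
      have hsplit : (2 * Real.pi * (δ * j + θ j) / n)
          = 2 * Real.pi * (δ * j) / n + 2 * Real.pi * θ j / n := by ring
      rw [hsplit, he_add, show e (2 * Real.pi * (δ * j) / n) * e (2 * Real.pi * θ j / n)
          - e (2 * Real.pi * (δ * j) / n)
          = e (2 * Real.pi * (δ * j) / n) * (e (2 * Real.pi * θ j / n) - 1) by ring,
        norm_mul, habs_e, one_mul]
      have hkey : ‖e (2 * Real.pi * θ j / n) - 1‖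
          = 2 * |Real.sin (2 * Real.pi * θ j / n / 2)| :=
        abs_exp_I_sub_one (2 * Real.pi * θ j / n)
      rw [hkey]
      set y : ℝ := 2 * Real.pi * θ j / n / 2 with hydef
      have hy32 : |y| ≤ Real.pi / 32 := by
        have : y = Real.pi * θ j / n := by rw [hydef]; ring
        rw [this, abs_div, abs_mul, abs_of_nonneg hpi.le, abs_of_nonneg hn0.le,
          div_le_div_iff₀ hn0 (by norm_num : (0:ℝ) < 32)]
        nlinarith [hθ j hj, abs_nonneg (θ j)]
      have h1 : |Real.sin y| = Real.sin |y| :=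
        abs_sin_eq_sin_abs y (le_trans hy32 (by nlinarith))
      have h2 : Real.sin |y| ≤ s := by
        rw [hsdef]
        exact Real.sin_le_sin_of_le_of_le_pi_div_two
          (by nlinarith [abs_nonneg y]) (by nlinarith) hy32
      rw [h1]
      linarith
    calc (∑ j ∈ J, ‖e (2 * Real.pi * (δ * j + θ j) / n)
          - e (2 * Real.pi * (δ * j) / n)‖)
        ≤ ∑ _j ∈ J, 2 * s := Finset.sum_le_sum hterm
      _ = m * (2 * s) := by rw [Finset.sum_const, nsmul_eq_mul, hmdef]
  -- Step B : |F - T| ≤ n - m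
  have hB : ‖F - T‖ ≤ (n : ℝ) - m := by
    have hsplit : F - T = ∑ j ∈ Finset.range n \ J, e (2 * Real.pi * (δ * j) / n) := by
      rw [hFdef, hTdef, eq_comm]
      exact Finset.sum_sdiff_eq_sub hJ
    rw [hsplit]
    refine le_trans (norm_sum_le _ _) (le_of_eq ?_)
    calc (∑ j ∈ Finset.range n \ J, ‖e (2 * Real.pi * (δ * j) / n)‖)
        = ∑ _j ∈ Finset.range n \ J, (1:ℝ) := Finset.sum_congr rfl fun j _ => habs_e _
      _ = ((Finset.range n \ J).card : ℝ) := by rw [Finset.sum_const, nsmul_eq_mul, mul_one]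
      _ = (n : ℝ) - m := by
          rw [Finset.card_sdiff_of_subset hJ, Finset.card_range, hmdef]
          have hc : J.card ≤ n := le_trans (Finset.card_le_card hJ) (le_of_eq (Finset.card_range n))
          push_cast [hc]
          ring
  -- sinc is nonneg on (-1,1)
  have hsinc_abs : ∀ (h : δ ≠ 0), |Real.sin (Real.pi * δ)| = sinc δ * (Real.pi * |δ|) := by
    intro h
    rw [sinc, if_neg h]
    rcases lt_or_gt_of_ne h with hlt | hgt
    · rw [abs_of_neg hlt, abs_of_nonpos, mul_neg]
      · field_simp
      · have : 0 < Real.sin (Real.pi * (-δ)) :=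
          Real.sin_pos_of_pos_of_lt_pi (by nlinarith) (by nlinarith [abs_of_neg hlt, hδ])
        rw [show Real.pi * δ = -(Real.pi * (-δ)) by ring, Real.sin_neg]
        linarith
    · rw [abs_of_pos hgt, abs_of_nonneg]
      · field_simp
      · exact le_of_lt (Real.sin_pos_of_pos_of_lt_pi (by nlinarith)
          (by nlinarith [abs_of_pos hgt, hδ]))
  have hsinc_nonneg : 0 ≤ sinc δ := by
    rcases eq_or_ne δ 0 with h | h
    · rw [h, sinc]; norm_num
    · have := hsinc_abs h
      have habs : 0 < Real.pi * |δ| := by positivity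
      nlinarith [abs_nonneg (Real.sin (Real.pi * δ))]
  -- Step C : n * sinc δ ≤ |F|
  have hC : (n : ℝ) * sinc δ ≤ ‖F‖ := by
    rcases eq_or_ne δ 0 with h | h
    · have : F = (n : ℂ) := by
        rw [hFdef]
        have : ∀ j ∈ Finset.range n, e (2 * Real.pi * (δ * j) / n) = 1 := by
          intro j _
          simp only [h, hedef]
          norm_num [Complex.exp_zero]
        rw [Finset.sum_congr rfl this, Finset.sum_const, Finset.card_range, nsmul_eq_mul, mul_one]
      rw [this, h, sinc, if_pos rfl, mul_one]
      simp [Complex.norm_natCast]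
    · -- geometric sum
      set r : ℂ := e (2 * Real.pi * δ / n) with hrdef
      have hterm : ∀ j ∈ Finset.range n, e (2 * Real.pi * (δ * j) / n) = r ^ j := by
        intro j _
        simp only [hrdef, hedef]
        rw [← Complex.exp_nat_mul]
        congr 1; push_cast; ring
      have hr1 : r ≠ 1 := by
        simp only [hrdef, hedef]
        intro hcon
        rw [Complex.exp_eq_one_iff] at hcon
        obtain ⟨k, hk⟩ := hcon
        rw [show ((k:ℂ)) * (2 * (Real.pi:ℂ) * Complex.I) = ((k * (2 * Real.pi) : ℝ) : ℂ) * Complex.I by push_cast; ring] at hk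
        have hreal : 2 * Real.pi * δ / n = k * (2 * Real.pi) := by
          have := mul_right_cancel₀ Complex.I_ne_zero hk
          exact_mod_cast this
        have hk0 : k ≠ 0 := by
          intro hk0
          rw [hk0] at hreal
          push_cast at hreal
          norm_num at hreal
          rcases hreal with h1 | h1
          · exact h h1
          · omega
        have hk1 : 1 ≤ |(k:ℝ)| := by
          exact_mod_cast Int.one_le_abs hk0
        have hδk : δ = k * n := by
          rw [div_eq_iff hn0.ne'] at hreal
          have h3 : 2 * Real.pi * δ = 2 * Real.pi * ((k:ℝ) * n) := by
            rw [hreal]; ring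
          exact mul_left_cancel₀ (by positivity : (2 * Real.pi : ℝ) ≠ 0) h3
        rw [hδk, abs_mul, abs_of_nonneg hn0.le] at hδ
        nlinarith
      have hFgeom : F = (r ^ n - 1) / (r - 1) := by
        rw [hFdef, Finset.sum_congr rfl hterm]
        exact geom_sum_eq hr1 n
      have hrn : r ^ n = e (2 * Real.pi * δ) := by
        simp only [hrdef, hedef]
        rw [← Complex.exp_nat_mul]
        have hnc : (n:ℂ) ≠ 0 := by exact_mod_cast hn0.ne'
        congr 1
        push_cast
        field_simp
      have habs_num : ‖r ^ n - 1‖ = 2 * |Real.sin (Real.pi * δ)| := by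
        rw [hrn]
        simp only [hedef]
        rw [abs_exp_I_sub_one]
        congr 2; ring
      have habs_den : ‖r - 1‖ = 2 * |Real.sin (Real.pi * δ / n)| := by
        simp only [hrdef, hedef]
        rw [abs_exp_I_sub_one]
        congr 2; ring
      -- evaluate denominator
      have hden_eq : |Real.sin (Real.pi * δ / n)| = Real.sin (Real.pi * |δ| / n) := by
        rw [show Real.pi * |δ| / n = |Real.pi * δ / n| by
          rw [abs_div, abs_mul, abs_of_nonneg hpi.le, abs_of_nonneg hn0.le]]
        exact abs_sin_eq_sin_abs _ (by
          rw [abs_div, abs_mul, abs_of_nonneg hpi.le, abs_of_nonneg hn0.le]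
          rw [div_le_iff₀ hn0]
          nlinarith [abs_nonneg δ, hn2, hpi])
      have hden_pos : 0 < Real.sin (Real.pi * |δ| / n) := by
        apply Real.sin_pos_of_pos_of_lt_pi
        · have : 0 < |δ| := abs_pos.mpr h
          positivity
        · rw [div_lt_iff₀ hn0]
          nlinarith [abs_nonneg δ, hn2, hpi, abs_pos.mpr h]
      have hden_le : Real.sin (Real.pi * |δ| / n) ≤ Real.pi * |δ| / n := by
        apply Real.sin_le
        have : 0 < |δ| := abs_pos.mpr h
        positivity
      have habsF : ‖F‖
          = sinc δ * (Real.pi * |δ|) / Real.sin (Real.pi * |δ| / n) := by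
        rw [hFgeom, norm_div, habs_num, habs_den, hden_eq, hsinc_abs h]
        rw [mul_div_mul_left _ _ (by norm_num : (2:ℝ) ≠ 0)]
      rw [habsF]
      have hnum_nonneg : 0 ≤ sinc δ * (Real.pi * |δ|) := by positivity
      have hfinal : (n : ℝ) * sinc δ = sinc δ * (Real.pi * |δ|) / (Real.pi * |δ| / n) := by
        have h0 : 0 < |δ| := abs_pos.mpr h
        field_simp
      rw [hfinal]
      gcongr
  -- combine
  have habsS : m * (1 - 2 * s) - (n : ℝ) * (1 - sinc δ) ≤ ‖S‖ := by
    have h1 : ‖F‖ ≤ ‖F - T‖ + ‖T‖ := by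
      have h := norm_add_le (F - T) T
      simpa [sub_add_cancel] using h
    have h2 : ‖T‖ ≤ ‖S‖ + ‖S - T‖ := by
      have h := norm_sub_le S (S - T)
      simpa [sub_sub_cancel] using h
    linarith
  have hApos : 0 ≤ 1 - 2 * s - (1 - sinc δ) * n / m := by
    rw [div_le_iff₀ (by linarith : (0:ℝ) < 1 - 2 * s)] at hcard
    have h2 : (1 - sinc δ) * n / m ≤ 1 - 2 * s := by
      rw [div_le_iff₀ hm0]
      nlinarith
    linarith
  have hkey : (1 - 2 * s - (1 - sinc δ) * n / m) * m ≤ ‖S‖ := by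
    have heq : (1 - 2 * s - (1 - sinc δ) * n / m) * m
        = m * (1 - 2 * s) - (n : ℝ) * (1 - sinc δ) := by
      field_simp
    rw [heq]
    exact habsS
  have hsq : ((1 - 2 * s - (1 - sinc δ) * n / m) * m) ^ 2 ≤ ‖S‖ ^ 2 := by
    apply pow_le_pow_left₀ (by positivity) hkey 2
  rw [mul_pow] at hsq
  have hm2 : (0:ℝ) < m ^ 2 := by positivity
  rw [show (1 / m ^ 2) * ‖S‖ ^ 2 = ‖S‖ ^ 2 / m ^ 2 by ring,
    le_div_iff₀ hm2]
  linarith
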